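/- The complex linear span of the six matrices B^id₁, B^id₂, B^sgn, B^ζ1, B^ζ2₁, B^ζ2₂ is a 6-dimensional Lie subalgebra of 𝔏_GM (closed under the commutator [X,Y] = XY − YX) which is invariant under the conjugation action Q ↦ K_σ Q K_σ⁻¹ for every σ ∈ 𝒢. (This is Model 6.6; permuting rows and columns according to the transposition (34) yields the strand-symmetric model.) -/

import Mathlib

open Matrix

noncomputable section

/-- The elementary rate matrix `L_ij`: entry 1 at `(i,j)`, entry −1 at `(j,j)`, 0 elsewhere. -/
def Lmat (i j : Fin 4) : Matrix (Fin 4) (Fin 4) ℂ :=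
  Matrix.single i j 1 - Matrix.single j j 1

/-- `𝔏_GM`: the 4×4 complex matrices each of whose columns sums to zero. -/
def LGMset : Set (Matrix (Fin 4) (Fin 4) ℂ) :=
  {Q | ∀ j, ∑ i, Q i j = 0}

/-- The permutation matrix `K_σ`, with entry 1 in position `(σ j, j)` for each `j`. -/
def Kmat (σ : Equiv.Perm (Fin 4)) : Matrix (Fin 4) (Fin 4) ℂ :=
  Matrix.of fun i j => if i = σ j then 1 else 0

/-- The permutation vector `P_σ := K_σ − I`. -/
def Pmat (σ : Equiv.Perm (Fin 4)) : Matrix (Fin 4) (Fin 4) ℂ :=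
  Kmat σ - 1

/-- The 4-cycle (1324) (on `{1,2,3,4}`, i.e. `0 ↦ 2 ↦ 1 ↦ 3 ↦ 0` on `Fin 4`). -/
def c1324 : Equiv.Perm (Fin 4) := Equiv.swap 0 3 * Equiv.swap 0 1 * Equiv.swap 0 2

/-- The 4-cycle (1423) (on `{1,2,3,4}`, i.e. `0 ↦ 3 ↦ 1 ↦ 2 ↦ 0` on `Fin 4`). -/
def c1423 : Equiv.Perm (Fin 4) := Equiv.swap 0 2 * Equiv.swap 0 1 * Equiv.swap 0 3

/-- The group 𝒢 = {e, (12), (34), (12)(34), (13)(24), (14)(23), (1324), (1423)},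
presented as a list of its eight elements. -/
def Glist : List (Equiv.Perm (Fin 4)) :=
  [1, Equiv.swap 0 1, Equiv.swap 2 3, Equiv.swap 0 1 * Equiv.swap 2 3,
   Equiv.swap 0 2 * Equiv.swap 1 3, Equiv.swap 0 3 * Equiv.swap 1 2, c1324, c1423]

/-- The cherry vector `Q₁₂ = L₁₃ + L₁₄ + L₂₃ + L₂₄` (1-based indices). -/
def Qc12 : Matrix (Fin 4) (Fin 4) ℂ := Lmat 0 2 + Lmat 0 3 + Lmat 1 2 + Lmat 1 3

/-- The cherry vector `Q₃₄ = L₃₁ + L₃₂ + L₄₁ + L₄₂` (1-based indices). -/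
def Qc34 : Matrix (Fin 4) (Fin 4) ℂ := Lmat 2 0 + Lmat 2 1 + Lmat 3 0 + Lmat 3 1

def Bid1 : Matrix (Fin 4) (Fin 4) ℂ := Pmat (Equiv.swap 0 1 * Equiv.swap 2 3)
def Bid2 : Matrix (Fin 4) (Fin 4) ℂ :=
  Pmat (Equiv.swap 0 2 * Equiv.swap 1 3) + Pmat (Equiv.swap 0 3 * Equiv.swap 1 2)
def Bsgn : Matrix (Fin 4) (Fin 4) ℂ :=
  Pmat (Equiv.swap 0 2 * Equiv.swap 1 3) - Pmat (Equiv.swap 0 3 * Equiv.swap 1 2)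
def Bzeta1 : Matrix (Fin 4) (Fin 4) ℂ := Pmat c1324 - Pmat c1423
def Bzeta2_1 : Matrix (Fin 4) (Fin 4) ℂ := Pmat (Equiv.swap 0 1) - Pmat (Equiv.swap 2 3)
def Bzeta2_2 : Matrix (Fin 4) (Fin 4) ℂ := Qc12 - Qc34

/-- The span of the six matrices of Model 6.6. -/
def model66 : Submodule ℂ (Matrix (Fin 4) (Fin 4) ℂ) :=
  Submodule.span ℂ
    ({Bid1, Bid2, Bsgn, Bzeta1, Bzeta2_1, Bzeta2_2} : Set (Matrix (Fin 4) (Fin 4) ℂ))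

set_option maxHeartbeats 4000000

section Aux

theorem mulFin4 {α} [AddCommMonoid α] [Mul α]
    (a₁₁ a₁₂ a₁₃ a₁₄ a₂₁ a₂₂ a₂₃ a₂₄ a₃₁ a₃₂ a₃₃ a₃₄ a₄₁ a₄₂ a₄₃ a₄₄
     b₁₁ b₁₂ b₁₃ b₁₄ b₂₁ b₂₂ b₂₃ b₂₄ b₃₁ b₃₂ b₃₃ b₃₄ b₄₁ b₄₂ b₄₃ b₄₄ : α) :
    !![a₁₁, a₁₂, a₁₃, a₁₄; a₂₁, a₂₂, a₂₃, a₂₄; a₃₁, a₃₂, a₃₃, a₃₄; a₄₁, a₄₂, a₄₃, a₄₄] *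
    !![b₁₁, b₁₂, b₁₃, b₁₄; b₂₁, b₂₂, b₂₃, b₂₄; b₃₁, b₃₂, b₃₃, b₃₄; b₄₁, b₄₂, b₄₃, b₄₄] =
    !![a₁₁*b₁₁ + a₁₂*b₂₁ + a₁₃*b₃₁ + a₁₄*b₄₁, a₁₁*b₁₂ + a₁₂*b₂₂ + a₁₃*b₃₂ + a₁₄*b₄₂,
         a₁₁*b₁₃ + a₁₂*b₂₃ + a₁₃*b₃₃ + a₁₄*b₄₃, a₁₁*b₁₄ + a₁₂*b₂₄ + a₁₃*b₃₄ + a₁₄*b₄₄;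
       a₂₁*b₁₁ + a₂₂*b₂₁ + a₂₃*b₃₁ + a₂₄*b₄₁, a₂₁*b₁₂ + a₂₂*b₂₂ + a₂₃*b₃₂ + a₂₄*b₄₂,
         a₂₁*b₁₃ + a₂₂*b₂₃ + a₂₃*b₃₃ + a₂₄*b₄₃, a₂₁*b₁₄ + a₂₂*b₂₄ + a₂₃*b₃₄ + a₂₄*b₄₄;
       a₃₁*b₁₁ + a₃₂*b₂₁ + a₃₃*b₃₁ + a₃₄*b₄₁, a₃₁*b₁₂ + a₃₂*b₂₂ + a₃₃*b₃₂ + a₃₄*b₄₂,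
         a₃₁*b₁₃ + a₃₂*b₂₃ + a₃₃*b₃₃ + a₃₄*b₄₃, a₃₁*b₁₄ + a₃₂*b₂₄ + a₃₃*b₃₄ + a₃₄*b₄₄;
       a₄₁*b₁₁ + a₄₂*b₂₁ + a₄₃*b₃₁ + a₄₄*b₄₁, a₄₁*b₁₂ + a₄₂*b₂₂ + a₄₃*b₃₂ + a₄₄*b₄₂,
         a₄₁*b₁₃ + a₄₂*b₂₃ + a₄₃*b₃₃ + a₄₄*b₄₃, a₄₁*b₁₄ + a₄₂*b₂₄ + a₄₃*b₃₄ + a₄₄*b₄₄] := by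
  ext i j
  fin_cases i <;> fin_cases j
    <;> simp [Matrix.mul_apply, dotProduct, Fin.sum_univ_succ, ← add_assoc]

theorem smulFin4 {α} [SMul ℂ α] (c : ℂ)
    (a₁₁ a₁₂ a₁₃ a₁₄ a₂₁ a₂₂ a₂₃ a₂₄ a₃₁ a₃₂ a₃₃ a₃₄ a₄₁ a₄₂ a₄₃ a₄₄ : α) :
    c • !![a₁₁, a₁₂, a₁₃, a₁₄; a₂₁, a₂₂, a₂₃, a₂₄; a₃₁, a₃₂, a₃₃, a₃₄; a₄₁, a₄₂, a₄₃, a₄₄] =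
    !![c•a₁₁, c•a₁₂, c•a₁₃, c•a₁₄; c•a₂₁, c•a₂₂, c•a₂₃, c•a₂₄;
       c•a₃₁, c•a₃₂, c•a₃₃, c•a₃₄; c•a₄₁, c•a₄₂, c•a₄₃, c•a₄₄] := by
  ext i j; fin_cases i <;> fin_cases j <;> rfl

theorem subFin4 {α} [Sub α]
    (a₁₁ a₁₂ a₁₃ a₁₄ a₂₁ a₂₂ a₂₃ a₂₄ a₃₁ a₃₂ a₃₃ a₃₄ a₄₁ a₄₂ a₄₃ a₄₄
     b₁₁ b₁₂ b₁₃ b₁₄ b₂₁ b₂₂ b₂₃ b₂₄ b₃₁ b₃₂ b₃₃ b₃₄ b₄₁ b₄₂ b₄₃ b₄₄ : α) :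
    !![a₁₁, a₁₂, a₁₃, a₁₄; a₂₁, a₂₂, a₂₃, a₂₄; a₃₁, a₃₂, a₃₃, a₃₄; a₄₁, a₄₂, a₄₃, a₄₄] -
    !![b₁₁, b₁₂, b₁₃, b₁₄; b₂₁, b₂₂, b₂₃, b₂₄; b₃₁, b₃₂, b₃₃, b₃₄; b₄₁, b₄₂, b₄₃, b₄₄] =
    !![a₁₁-b₁₁, a₁₂-b₁₂, a₁₃-b₁₃, a₁₄-b₁₄; a₂₁-b₂₁, a₂₂-b₂₂, a₂₃-b₂₃, a₂₄-b₂₄;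
       a₃₁-b₃₁, a₃₂-b₃₂, a₃₃-b₃₃, a₃₄-b₃₄; a₄₁-b₄₁, a₄₂-b₄₂, a₄₃-b₄₃, a₄₄-b₄₄] := by
  ext i j; fin_cases i <;> fin_cases j <;> rfl

theorem addFin4 {α} [Add α]
    (a₁₁ a₁₂ a₁₃ a₁₄ a₂₁ a₂₂ a₂₃ a₂₄ a₃₁ a₃₂ a₃₃ a₃₄ a₄₁ a₄₂ a₄₃ a₄₄
     b₁₁ b₁₂ b₁₃ b₁₄ b₂₁ b₂₂ b₂₃ b₂₄ b₃₁ b₃₂ b₃₃ b₃₄ b₄₁ b₄₂ b₄₃ b₄₄ : α) :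
    !![a₁₁, a₁₂, a₁₃, a₁₄; a₂₁, a₂₂, a₂₃, a₂₄; a₃₁, a₃₂, a₃₃, a₃₄; a₄₁, a₄₂, a₄₃, a₄₄] +
    !![b₁₁, b₁₂, b₁₃, b₁₄; b₂₁, b₂₂, b₂₃, b₂₄; b₃₁, b₃₂, b₃₃, b₃₄; b₄₁, b₄₂, b₄₃, b₄₄] =
    !![a₁₁+b₁₁, a₁₂+b₁₂, a₁₃+b₁₃, a₁₄+b₁₄; a₂₁+b₂₁, a₂₂+b₂₂, a₂₃+b₂₃, a₂₄+b₂₄;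
       a₃₁+b₃₁, a₃₂+b₃₂, a₃₃+b₃₃, a₃₄+b₃₄; a₄₁+b₄₁, a₄₂+b₄₂, a₄₃+b₄₃, a₄₄+b₄₄] := by
  ext i j; fin_cases i <;> fin_cases j <;> rfl

theorem negFin4 {α} [Neg α]
    (a₁₁ a₁₂ a₁₃ a₁₄ a₂₁ a₂₂ a₂₃ a₂₄ a₃₁ a₃₂ a₃₃ a₃₄ a₄₁ a₄₂ a₄₃ a₄₄ : α) :
    -(!![a₁₁, a₁₂, a₁₃, a₁₄; a₂₁, a₂₂, a₂₃, a₂₄; a₃₁, a₃₂, a₃₃, a₃₄; a₄₁, a₄₂, a₄₃, a₄₄]) =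
    !![-a₁₁, -a₁₂, -a₁₃, -a₁₄; -a₂₁, -a₂₂, -a₂₃, -a₂₄;
       -a₃₁, -a₃₂, -a₃₃, -a₃₄; -a₄₁, -a₄₂, -a₄₃, -a₄₄] := by
  ext i j; fin_cases i <;> fin_cases j <;> rfl

theorem eqFin4 {α} {a₁₁ a₁₂ a₁₃ a₁₄ a₂₁ a₂₂ a₂₃ a₂₄ a₃₁ a₃₂ a₃₃ a₃₄ a₄₁ a₄₂ a₄₃ a₄₄
     b₁₁ b₁₂ b₁₃ b₁₄ b₂₁ b₂₂ b₂₃ b₂₄ b₃₁ b₃₂ b₃₃ b₃₄ b₄₁ b₄₂ b₄₃ b₄₄ : α}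
    (h11 : a₁₁ = b₁₁) (h12 : a₁₂ = b₁₂) (h13 : a₁₃ = b₁₃) (h14 : a₁₄ = b₁₄)
    (h21 : a₂₁ = b₂₁) (h22 : a₂₂ = b₂₂) (h23 : a₂₃ = b₂₃) (h24 : a₂₄ = b₂₄)
    (h31 : a₃₁ = b₃₁) (h32 : a₃₂ = b₃₂) (h33 : a₃₃ = b₃₃) (h34 : a₃₄ = b₃₄)
    (h41 : a₄₁ = b₄₁) (h42 : a₄₂ = b₄₂) (h43 : a₄₃ = b₄₃) (h44 : a₄₄ = b₄₄) :
    !![a₁₁, a₁₂, a₁₃, a₁₄; a₂₁, a₂₂, a₂₃, a₂₄; a₃₁, a₃₂, a₃₃, a₃₄; a₄₁, a₄₂, a₄₃, a₄₄] =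
    !![b₁₁, b₁₂, b₁₃, b₁₄; b₂₁, b₂₂, b₂₃, b₂₄; b₃₁, b₃₂, b₃₃, b₃₄; b₄₁, b₄₂, b₄₃, b₄₄] := by
  subst_vars; rfl

lemma Lmat_apply (i j k l : Fin 4) :
    Lmat i j k l = (if k = i ∧ l = j then 1 else 0) - (if k = j ∧ l = j then 1 else 0) := by
  simp [Lmat, Matrix.single_apply, and_comm, eq_comm]

end Aux

lemma eqB1 : Bid1 = (!![-1,1,0,0; 1,-1,0,0; 0,0,-1,1; 0,0,1,-1] : Matrix (Fin 4) (Fin 4) ℂ) := by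
  ext i j
  fin_cases i <;> fin_cases j <;>
    simp (config := { decide := true }) [Bid1, Pmat, Kmat, Matrix.one_apply,
      Matrix.vecHead, Matrix.vecTail] <;> norm_num

lemma eqB2 : Bid2 = (!![-2,0,1,1; 0,-2,1,1; 1,1,-2,0; 1,1,0,-2] : Matrix (Fin 4) (Fin 4) ℂ) := by
  ext i j
  fin_cases i <;> fin_cases j <;>
    simp (config := { decide := true }) [Bid2, Pmat, Kmat, Matrix.one_apply,
      Matrix.vecHead, Matrix.vecTail] <;> norm_num

lemma eqB3 : Bsgn = (!![0,0,1,-1; 0,0,-1,1; 1,-1,0,0; -1,1,0,0] : Matrix (Fin 4) (Fin 4) ℂ) := by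
  ext i j
  fin_cases i <;> fin_cases j <;>
    simp (config := { decide := true }) [Bsgn, Pmat, Kmat, Matrix.one_apply,
      Matrix.vecHead, Matrix.vecTail] <;> norm_num

lemma eqB4 : Bzeta1 = (!![0,0,-1,1; 0,0,1,-1; 1,-1,0,0; -1,1,0,0] : Matrix (Fin 4) (Fin 4) ℂ) := by
  ext i j
  fin_cases i <;> fin_cases j <;>
    simp (config := { decide := true }) [Bzeta1, Pmat, Kmat, c1324, c1423, Matrix.one_apply,
      Matrix.vecHead, Matrix.vecTail] <;> norm_num

lemma eqB5 : Bzeta2_1 = (!![-1,1,0,0; 1,-1,0,0; 0,0,1,-1; 0,0,-1,1] : Matrix (Fin 4) (Fin 4) ℂ) := by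
  ext i j
  fin_cases i <;> fin_cases j <;>
    simp (config := { decide := true }) [Bzeta2_1, Pmat, Kmat, Matrix.one_apply,
      Matrix.vecHead, Matrix.vecTail] <;> norm_num

lemma eqB6 : Bzeta2_2 = (!![2,0,1,1; 0,2,1,1; -1,-1,-2,0; -1,-1,0,-2] : Matrix (Fin 4) (Fin 4) ℂ) := by
  ext i j
  fin_cases i <;> fin_cases j <;>
    simp (config := { decide := true }) [Bzeta2_2, Qc12, Qc34, Lmat_apply, Matrix.one_apply,
      Matrix.vecHead, Matrix.vecTail] <;> norm_num

lemma hB1 : Bid1 ∈ model66 := Submodule.subset_span (by left; rfl)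
lemma hB2 : Bid2 ∈ model66 := Submodule.subset_span (by right; left; rfl)
lemma hB3 : Bsgn ∈ model66 := Submodule.subset_span (by right; right; left; rfl)
lemma hB4 : Bzeta1 ∈ model66 := Submodule.subset_span (by right; right; right; left; rfl)
lemma hB5 : Bzeta2_1 ∈ model66 :=
  Submodule.subset_span (by right; right; right; right; left; rfl)
lemma hB6 : Bzeta2_2 ∈ model66 :=
  Submodule.subset_span (by right; right; right; right; right; rfl)

lemma comm_1_2 : Bid1 * Bid2 = Bid2 * Bid1 := by
  rw [eqB1, eqB2]
  rw [mulFin4, mulFin4]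
  exact eqFin4 (by norm_num) (by norm_num) (by norm_num) (by norm_num) (by norm_num) (by norm_num) (by norm_num) (by norm_num) (by norm_num) (by norm_num) (by norm_num) (by norm_num) (by norm_num) (by norm_num) (by norm_num) (by norm_num)

lemma mem_1_2 : Bid1 * Bid2 - Bid2 * Bid1 ∈ model66 := by
  rw [comm_1_2, sub_self]; exact zero_mem _

lemma comm_1_3 : Bid1 * Bsgn = Bsgn * Bid1 := by
  rw [eqB1, eqB3]
  rw [mulFin4, mulFin4]
  exact eqFin4 (by norm_num) (by norm_num) (by norm_num) (by norm_num) (by norm_num) (by norm_num) (by norm_num) (by norm_num) (by norm_num) (by norm_num) (by norm_num) (by norm_num) (by norm_num) (by norm_num) (by norm_num) (by norm_num)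

lemma mem_1_3 : Bid1 * Bsgn - Bsgn * Bid1 ∈ model66 := by
  rw [comm_1_3, sub_self]; exact zero_mem _

lemma comm_1_4 : Bid1 * Bzeta1 = Bzeta1 * Bid1 := by
  rw [eqB1, eqB4]
  rw [mulFin4, mulFin4]
  exact eqFin4 (by norm_num) (by norm_num) (by norm_num) (by norm_num) (by norm_num) (by norm_num) (by norm_num) (by norm_num) (by norm_num) (by norm_num) (by norm_num) (by norm_num) (by norm_num) (by norm_num) (by norm_num) (by norm_num)

lemma mem_1_4 : Bid1 * Bzeta1 - Bzeta1 * Bid1 ∈ model66 := by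
  rw [comm_1_4, sub_self]; exact zero_mem _

lemma comm_1_5 : Bid1 * Bzeta2_1 = Bzeta2_1 * Bid1 := by
  rw [eqB1, eqB5]
  rw [mulFin4, mulFin4]
  exact eqFin4 (by norm_num) (by norm_num) (by norm_num) (by norm_num) (by norm_num) (by norm_num) (by norm_num) (by norm_num) (by norm_num) (by norm_num) (by norm_num) (by norm_num) (by norm_num) (by norm_num) (by norm_num) (by norm_num)

lemma mem_1_5 : Bid1 * Bzeta2_1 - Bzeta2_1 * Bid1 ∈ model66 := by
  rw [comm_1_5, sub_self]; exact zero_mem _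

lemma comm_1_6 : Bid1 * Bzeta2_2 = Bzeta2_2 * Bid1 := by
  rw [eqB1, eqB6]
  rw [mulFin4, mulFin4]
  exact eqFin4 (by norm_num) (by norm_num) (by norm_num) (by norm_num) (by norm_num) (by norm_num) (by norm_num) (by norm_num) (by norm_num) (by norm_num) (by norm_num) (by norm_num) (by norm_num) (by norm_num) (by norm_num) (by norm_num)

lemma mem_1_6 : Bid1 * Bzeta2_2 - Bzeta2_2 * Bid1 ∈ model66 := by
  rw [comm_1_6, sub_self]; exact zero_mem _

lemma comm_2_3 : Bid2 * Bsgn = Bsgn * Bid2 := by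
  rw [eqB2, eqB3]
  rw [mulFin4, mulFin4]
  exact eqFin4 (by norm_num) (by norm_num) (by norm_num) (by norm_num) (by norm_num) (by norm_num) (by norm_num) (by norm_num) (by norm_num) (by norm_num) (by norm_num) (by norm_num) (by norm_num) (by norm_num) (by norm_num) (by norm_num)

lemma mem_2_3 : Bid2 * Bsgn - Bsgn * Bid2 ∈ model66 := by
  rw [comm_2_3, sub_self]; exact zero_mem _

lemma comm_2_4 : Bid2 * Bzeta1 = Bzeta1 * Bid2 := by
  rw [eqB2, eqB4]
  rw [mulFin4, mulFin4]
  exact eqFin4 (by norm_num) (by norm_num) (by norm_num) (by norm_num) (by norm_num) (by norm_num) (by norm_num) (by norm_num) (by norm_num) (by norm_num) (by norm_num) (by norm_num) (by norm_num) (by norm_num) (by norm_num) (by norm_num)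

lemma mem_2_4 : Bid2 * Bzeta1 - Bzeta1 * Bid2 ∈ model66 := by
  rw [comm_2_4, sub_self]; exact zero_mem _

lemma comm_2_5 : Bid2 * Bzeta2_1 = Bzeta2_1 * Bid2 := by
  rw [eqB2, eqB5]
  rw [mulFin4, mulFin4]
  exact eqFin4 (by norm_num) (by norm_num) (by norm_num) (by norm_num) (by norm_num) (by norm_num) (by norm_num) (by norm_num) (by norm_num) (by norm_num) (by norm_num) (by norm_num) (by norm_num) (by norm_num) (by norm_num) (by norm_num)

lemma mem_2_5 : Bid2 * Bzeta2_1 - Bzeta2_1 * Bid2 ∈ model66 := by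
  rw [comm_2_5, sub_self]; exact zero_mem _

lemma comm_2_6 : Bid2 * Bzeta2_2 - Bzeta2_2 * Bid2 = ((-4:ℂ)) • Bzeta2_1 + ((-4:ℂ)) • Bzeta2_2 := by
  rw [eqB2, eqB6, eqB5]
  rw [mulFin4, mulFin4, smulFin4, smulFin4, addFin4, subFin4]
  exact eqFin4 (by norm_num) (by norm_num) (by norm_num) (by norm_num) (by norm_num) (by norm_num) (by norm_num) (by norm_num) (by norm_num) (by norm_num) (by norm_num) (by norm_num) (by norm_num) (by norm_num) (by norm_num) (by norm_num)

lemma mem_2_6 : Bid2 * Bzeta2_2 - Bzeta2_2 * Bid2 ∈ model66 := by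
  rw [comm_2_6]
  exact add_mem (Submodule.smul_mem _ _ hB5) (Submodule.smul_mem _ _ hB6)

lemma comm_3_4 : Bsgn * Bzeta1 - Bzeta1 * Bsgn = ((-4:ℂ)) • Bzeta2_1 := by
  rw [eqB3, eqB4, eqB5]
  rw [mulFin4, mulFin4, smulFin4, subFin4]
  exact eqFin4 (by norm_num) (by norm_num) (by norm_num) (by norm_num) (by norm_num) (by norm_num) (by norm_num) (by norm_num) (by norm_num) (by norm_num) (by norm_num) (by norm_num) (by norm_num) (by norm_num) (by norm_num) (by norm_num)

lemma mem_3_4 : Bsgn * Bzeta1 - Bzeta1 * Bsgn ∈ model66 := by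
  rw [comm_3_4]
  exact Submodule.smul_mem _ _ hB5

lemma comm_3_5 : Bsgn * Bzeta2_1 - Bzeta2_1 * Bsgn = ((-4:ℂ)) • Bzeta1 := by
  rw [eqB3, eqB5, eqB4]
  rw [mulFin4, mulFin4, smulFin4, subFin4]
  exact eqFin4 (by norm_num) (by norm_num) (by norm_num) (by norm_num) (by norm_num) (by norm_num) (by norm_num) (by norm_num) (by norm_num) (by norm_num) (by norm_num) (by norm_num) (by norm_num) (by norm_num) (by norm_num) (by norm_num)

lemma mem_3_5 : Bsgn * Bzeta2_1 - Bzeta2_1 * Bsgn ∈ model66 := by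
  rw [comm_3_5]
  exact Submodule.smul_mem _ _ hB4

lemma comm_3_6 : Bsgn * Bzeta2_2 - Bzeta2_2 * Bsgn = ((4:ℂ)) • Bzeta1 := by
  rw [eqB3, eqB6, eqB4]
  rw [mulFin4, mulFin4, smulFin4, subFin4]
  exact eqFin4 (by norm_num) (by norm_num) (by norm_num) (by norm_num) (by norm_num) (by norm_num) (by norm_num) (by norm_num) (by norm_num) (by norm_num) (by norm_num) (by norm_num) (by norm_num) (by norm_num) (by norm_num) (by norm_num)

lemma mem_3_6 : Bsgn * Bzeta2_2 - Bzeta2_2 * Bsgn ∈ model66 := by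
  rw [comm_3_6]
  exact Submodule.smul_mem _ _ hB4

lemma comm_4_5 : Bzeta1 * Bzeta2_1 - Bzeta2_1 * Bzeta1 = ((-4:ℂ)) • Bsgn := by
  rw [eqB4, eqB5, eqB3]
  rw [mulFin4, mulFin4, smulFin4, subFin4]
  exact eqFin4 (by norm_num) (by norm_num) (by norm_num) (by norm_num) (by norm_num) (by norm_num) (by norm_num) (by norm_num) (by norm_num) (by norm_num) (by norm_num) (by norm_num) (by norm_num) (by norm_num) (by norm_num) (by norm_num)

lemma mem_4_5 : Bzeta1 * Bzeta2_1 - Bzeta2_1 * Bzeta1 ∈ model66 := by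
  rw [comm_4_5]
  exact Submodule.smul_mem _ _ hB3

lemma comm_4_6 : Bzeta1 * Bzeta2_2 - Bzeta2_2 * Bzeta1 = ((4:ℂ)) • Bsgn := by
  rw [eqB4, eqB6, eqB3]
  rw [mulFin4, mulFin4, smulFin4, subFin4]
  exact eqFin4 (by norm_num) (by norm_num) (by norm_num) (by norm_num) (by norm_num) (by norm_num) (by norm_num) (by norm_num) (by norm_num) (by norm_num) (by norm_num) (by norm_num) (by norm_num) (by norm_num) (by norm_num) (by norm_num)

lemma mem_4_6 : Bzeta1 * Bzeta2_2 - Bzeta2_2 * Bzeta1 ∈ model66 := by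
  rw [comm_4_6]
  exact Submodule.smul_mem _ _ hB3

lemma comm_5_6 : Bzeta2_1 * Bzeta2_2 = Bzeta2_2 * Bzeta2_1 := by
  rw [eqB5, eqB6]
  rw [mulFin4, mulFin4]
  exact eqFin4 (by norm_num) (by norm_num) (by norm_num) (by norm_num) (by norm_num) (by norm_num) (by norm_num) (by norm_num) (by norm_num) (by norm_num) (by norm_num) (by norm_num) (by norm_num) (by norm_num) (by norm_num) (by norm_num)

lemma mem_5_6 : Bzeta2_1 * Bzeta2_2 - Bzeta2_2 * Bzeta2_1 ∈ model66 := by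
  rw [comm_5_6, sub_self]; exact zero_mem _

lemma gen_bracket : ∀ x ∈ ({Bid1, Bid2, Bsgn, Bzeta1, Bzeta2_1, Bzeta2_2} :
      Set (Matrix (Fin 4) (Fin 4) ℂ)), ∀ y ∈ ({Bid1, Bid2, Bsgn, Bzeta1, Bzeta2_1, Bzeta2_2} :
      Set (Matrix (Fin 4) (Fin 4) ℂ)), x * y - y * x ∈ model66 := by
  intro x hx y hy
  simp only [Set.mem_insert_iff, Set.mem_singleton_iff] at hx hy
  rcases hx with rfl|rfl|rfl|rfl|rfl|rfl <;> rcases hy with rfl|rfl|rfl|rfl|rfl|rfl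
  · rw [sub_self]; exact zero_mem _
  · exact mem_1_2
  · exact mem_1_3
  · exact mem_1_4
  · exact mem_1_5
  · exact mem_1_6
  · rw [show Bid2 * Bid1 - Bid1 * Bid2 = -(Bid1 * Bid2 - Bid2 * Bid1) from (neg_sub _ _).symm]; exact neg_mem mem_1_2
  · rw [sub_self]; exact zero_mem _
  · exact mem_2_3
  · exact mem_2_4
  · exact mem_2_5
  · exact mem_2_6
  · rw [show Bsgn * Bid1 - Bid1 * Bsgn = -(Bid1 * Bsgn - Bsgn * Bid1) from (neg_sub _ _).symm]; exact neg_mem mem_1_3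
  · rw [show Bsgn * Bid2 - Bid2 * Bsgn = -(Bid2 * Bsgn - Bsgn * Bid2) from (neg_sub _ _).symm]; exact neg_mem mem_2_3
  · rw [sub_self]; exact zero_mem _
  · exact mem_3_4
  · exact mem_3_5
  · exact mem_3_6
  · rw [show Bzeta1 * Bid1 - Bid1 * Bzeta1 = -(Bid1 * Bzeta1 - Bzeta1 * Bid1) from (neg_sub _ _).symm]; exact neg_mem mem_1_4
  · rw [show Bzeta1 * Bid2 - Bid2 * Bzeta1 = -(Bid2 * Bzeta1 - Bzeta1 * Bid2) from (neg_sub _ _).symm]; exact neg_mem mem_2_4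
  · rw [show Bzeta1 * Bsgn - Bsgn * Bzeta1 = -(Bsgn * Bzeta1 - Bzeta1 * Bsgn) from (neg_sub _ _).symm]; exact neg_mem mem_3_4
  · rw [sub_self]; exact zero_mem _
  · exact mem_4_5
  · exact mem_4_6
  · rw [show Bzeta2_1 * Bid1 - Bid1 * Bzeta2_1 = -(Bid1 * Bzeta2_1 - Bzeta2_1 * Bid1) from (neg_sub _ _).symm]; exact neg_mem mem_1_5
  · rw [show Bzeta2_1 * Bid2 - Bid2 * Bzeta2_1 = -(Bid2 * Bzeta2_1 - Bzeta2_1 * Bid2) from (neg_sub _ _).symm]; exact neg_mem mem_2_5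
  · rw [show Bzeta2_1 * Bsgn - Bsgn * Bzeta2_1 = -(Bsgn * Bzeta2_1 - Bzeta2_1 * Bsgn) from (neg_sub _ _).symm]; exact neg_mem mem_3_5
  · rw [show Bzeta2_1 * Bzeta1 - Bzeta1 * Bzeta2_1 = -(Bzeta1 * Bzeta2_1 - Bzeta2_1 * Bzeta1) from (neg_sub _ _).symm]; exact neg_mem mem_4_5
  · rw [sub_self]; exact zero_mem _
  · exact mem_5_6
  · rw [show Bzeta2_2 * Bid1 - Bid1 * Bzeta2_2 = -(Bid1 * Bzeta2_2 - Bzeta2_2 * Bid1) from (neg_sub _ _).symm]; exact neg_mem mem_1_6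
  · rw [show Bzeta2_2 * Bid2 - Bid2 * Bzeta2_2 = -(Bid2 * Bzeta2_2 - Bzeta2_2 * Bid2) from (neg_sub _ _).symm]; exact neg_mem mem_2_6
  · rw [show Bzeta2_2 * Bsgn - Bsgn * Bzeta2_2 = -(Bsgn * Bzeta2_2 - Bzeta2_2 * Bsgn) from (neg_sub _ _).symm]; exact neg_mem mem_3_6
  · rw [show Bzeta2_2 * Bzeta1 - Bzeta1 * Bzeta2_2 = -(Bzeta1 * Bzeta2_2 - Bzeta2_2 * Bzeta1) from (neg_sub _ _).symm]; exact neg_mem mem_4_6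
  · rw [show Bzeta2_2 * Bzeta2_1 - Bzeta2_1 * Bzeta2_2 = -(Bzeta2_1 * Bzeta2_2 - Bzeta2_2 * Bzeta2_1) from (neg_sub _ _).symm]; exact neg_mem mem_5_6
  · rw [sub_self]; exact zero_mem _

lemma bracket_closed : ∀ X ∈ model66, ∀ Y ∈ model66, X * Y - Y * X ∈ model66 := by
  have step : ∀ x ∈ ({Bid1, Bid2, Bsgn, Bzeta1, Bzeta2_1, Bzeta2_2} :
      Set (Matrix (Fin 4) (Fin 4) ℂ)), ∀ Y ∈ model66, x * Y - Y * x ∈ model66 := by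
    intro x hx Y hY
    induction hY using Submodule.span_induction with
    | mem y hy => exact gen_bracket x hx y hy
    | zero => simpa using zero_mem model66
    | add y z _ _ hy' hz' =>
        have h : x * (y + z) - (y + z) * x = (x * y - y * x) + (x * z - z * x) := by
          noncomm_ring
        rw [h]; exact add_mem hy' hz'
    | smul c y _ hy' =>
        have h : x * (c • y) - (c • y) * x = c • (x * y - y * x) := by
          rw [mul_smul_comm, smul_mul_assoc, smul_sub]
        rw [h]; exact Submodule.smul_mem _ _ hy'
  intro X hX Y hY
  induction hX using Submodule.span_induction with
  | mem x hx => exact step x hx Y hY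
  | zero => simpa using zero_mem model66
  | add x z _ _ hx' hz' =>
      have h : (x + z) * Y - Y * (x + z) = (x * Y - Y * x) + (z * Y - Y * z) := by
        noncomm_ring
      rw [h]; exact add_mem hx' hz'
  | smul c x _ hx' =>
      have h : (c • x) * Y - Y * (c • x) = c • (x * Y - Y * x) := by
        rw [mul_smul_comm, smul_mul_assoc, smul_sub]
      rw [h]; exact Submodule.smul_mem _ _ hx'

def LGMsub : Submodule ℂ (Matrix (Fin 4) (Fin 4) ℂ) where
  carrier := LGMset
  zero_mem' := by intro j; simp
  add_mem' := by
    intro a b ha hb j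
    have : ∑ i, (a + b) i j = (∑ i, a i j) + ∑ i, b i j := by
      simp [Matrix.add_apply, Finset.sum_add_distrib]
    rw [this, ha j, hb j, add_zero]
  smul_mem' := by
    intro c a ha j
    have : ∑ i, (c • a) i j = c * ∑ i, a i j := by
      simp [Matrix.smul_apply, Finset.mul_sum]
    rw [this, ha j, mul_zero]

lemma model66_sub_LGM : (model66 : Set (Matrix (Fin 4) (Fin 4) ℂ)) ⊆ LGMset := by
  intro x hx
  refine Submodule.span_le (p := LGMsub).mpr ?_ hx
  intro b hb
  simp only [Set.mem_insert_iff, Set.mem_singleton_iff] at hb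
  rcases hb with rfl|rfl|rfl|rfl|rfl|rfl
  · intro j; rw [eqB1]; fin_cases j <;> norm_num [Fin.sum_univ_four, Matrix.vecHead, Matrix.vecTail, Matrix.cons_val_two, Matrix.cons_val_three]
  · intro j; rw [eqB2]; fin_cases j <;> norm_num [Fin.sum_univ_four, Matrix.vecHead, Matrix.vecTail, Matrix.cons_val_two, Matrix.cons_val_three]
  · intro j; rw [eqB3]; fin_cases j <;> norm_num [Fin.sum_univ_four, Matrix.vecHead, Matrix.vecTail, Matrix.cons_val_two, Matrix.cons_val_three]
  · intro j; rw [eqB4]; fin_cases j <;> norm_num [Fin.sum_univ_four, Matrix.vecHead, Matrix.vecTail, Matrix.cons_val_two, Matrix.cons_val_three]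
  · intro j; rw [eqB5]; fin_cases j <;> norm_num [Fin.sum_univ_four, Matrix.vecHead, Matrix.vecTail, Matrix.cons_val_two, Matrix.cons_val_three]
  · intro j; rw [eqB6]; fin_cases j <;> norm_num [Fin.sum_univ_four, Matrix.vecHead, Matrix.vecTail, Matrix.cons_val_two, Matrix.cons_val_three]

lemma finrank_model66 : Module.finrank ℂ ↥model66 = 6 := by
  classical
  have hset : ({Bid1, Bid2, Bsgn, Bzeta1, Bzeta2_1, Bzeta2_2} :
      Set (Matrix (Fin 4) (Fin 4) ℂ)) =
      Set.range ![Bid1, Bid2, Bsgn, Bzeta1, Bzeta2_1, Bzeta2_2] := by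
    ext x
    simp only [Set.mem_insert_iff, Set.mem_singleton_iff, Set.mem_range,
      Fin.exists_fin_succ, IsEmpty.exists_iff, Matrix.cons_val_zero, Matrix.cons_val_succ,
      or_false]
    tauto
  have hli : LinearIndependent ℂ ![Bid1, Bid2, Bsgn, Bzeta1, Bzeta2_1, Bzeta2_2] := by
    rw [Fintype.linearIndependent_iff]
    intro g hg
    have hg' : g 0 • Bid1 + g 1 • Bid2 + g 2 • Bsgn + g 3 • Bzeta1 +
        g 4 • Bzeta2_1 + g 5 • Bzeta2_2 = 0 := by
      simpa [Fin.sum_univ_succ, Matrix.cons_val_zero, Matrix.cons_val_succ,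
        add_assoc] using hg
    have e1 := congrFun (congrFun hg' 0) 1
    have e2 := congrFun (congrFun hg' 2) 3
    have e3 := congrFun (congrFun hg' 0) 2
    have e4 := congrFun (congrFun hg' 0) 3
    have e5 := congrFun (congrFun hg' 2) 0
    have e6 := congrFun (congrFun hg' 2) 1
    rw [eqB1, eqB2, eqB3, eqB4, eqB5, eqB6] at e1 e2 e3 e4 e5 e6
    norm_num [Matrix.vecHead, Matrix.vecTail, Matrix.cons_val_two, Matrix.cons_val_three] at e1 e2 e3 e4 e5 e6
    intro i
    fin_cases i
    · show g 0 = 0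
      linear_combination (e1 + e2) / 2
    · show g 1 = 0
      linear_combination (e3 + e4 + e5 + e6) / 4
    · show g 2 = 0
      linear_combination (e3 - e4 + e5 - e6) / 4
    · show g 3 = 0
      linear_combination (-e3 + e4 + e5 - e6) / 4
    · show g 4 = 0
      linear_combination (e1 - e2) / 2
    · show g 5 = 0
      linear_combination (e3 + e4 - e5 - e6) / 4
  have : model66 = Submodule.span ℂ
      (Set.range ![Bid1, Bid2, Bsgn, Bzeta1, Bzeta2_1, Bzeta2_2]) := by
    rw [model66, hset]
  rw [this, finrank_span_eq_card hli]
  simp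

lemma Kmul (σ τ : Equiv.Perm (Fin 4)) : Kmat σ * Kmat τ = Kmat (σ * τ) := by
  ext i j
  simp [Kmat, Matrix.mul_apply, mul_ite, ite_mul, Finset.sum_ite_eq, Equiv.Perm.mul_apply]
  congr

lemma Kone : Kmat 1 = 1 := by
  ext i j; simp [Kmat, Matrix.one_apply]
  congr

lemma Kinv (σ : Equiv.Perm (Fin 4)) : (Kmat σ)⁻¹ = Kmat σ⁻¹ := by
  apply Matrix.inv_eq_right_inv
  rw [Kmul]
  simp [Kone]

lemma eqKs : Kmat (Equiv.swap 0 1) = (!![0,1,0,0; 1,0,0,0; 0,0,1,0; 0,0,0,1] :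
    Matrix (Fin 4) (Fin 4) ℂ) := by
  ext i j
  fin_cases i <;> fin_cases j <;>
    simp (config := { decide := true }) [Kmat, Matrix.vecHead, Matrix.vecTail]

lemma eqKg : Kmat c1324 = (!![0,0,0,1; 0,0,1,0; 1,0,0,0; 0,1,0,0] :
    Matrix (Fin 4) (Fin 4) ℂ) := by
  ext i j
  fin_cases i <;> fin_cases j <;>
    simp (config := { decide := true }) [Kmat, c1324, Matrix.vecHead, Matrix.vecTail]

lemma eqKginv : Kmat c1423 = (!![0,0,1,0; 0,0,0,1; 0,1,0,0; 1,0,0,0] :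
    Matrix (Fin 4) (Fin 4) ℂ) := by
  ext i j
  fin_cases i <;> fin_cases j <;>
    simp (config := { decide := true }) [Kmat, c1423, Matrix.vecHead, Matrix.vecTail]

def Cprop (σ : Equiv.Perm (Fin 4)) : Prop :=
  ∀ Q ∈ model66, Kmat σ * Q * Kmat σ⁻¹ ∈ model66

lemma Cspan (σ : Equiv.Perm (Fin 4))
    (h : ∀ b ∈ ({Bid1, Bid2, Bsgn, Bzeta1, Bzeta2_1, Bzeta2_2} :
      Set (Matrix (Fin 4) (Fin 4) ℂ)), Kmat σ * b * Kmat σ⁻¹ ∈ model66) : Cprop σ := by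
  intro Q hQ
  induction hQ using Submodule.span_induction with
  | mem b hb => exact h b hb
  | zero => simpa using zero_mem model66
  | add y z _ _ hy' hz' =>
      have hh : Kmat σ * (y + z) * Kmat σ⁻¹ =
          Kmat σ * y * Kmat σ⁻¹ + Kmat σ * z * Kmat σ⁻¹ := by noncomm_ring
      rw [hh]; exact add_mem hy' hz'
  | smul c y _ hy' =>
      have hh : Kmat σ * (c • y) * Kmat σ⁻¹ = c • (Kmat σ * y * Kmat σ⁻¹) := by
        rw [mul_smul_comm, smul_mul_assoc]
      rw [hh]; exact Submodule.smul_mem _ _ hy'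

lemma Cmul {σ τ : Equiv.Perm (Fin 4)} (hσ : Cprop σ) (hτ : Cprop τ) : Cprop (σ * τ) := by
  intro Q hQ
  have hh : Kmat (σ * τ) * Q * Kmat (σ * τ)⁻¹ =
      Kmat σ * (Kmat τ * Q * Kmat τ⁻¹) * Kmat σ⁻¹ := by
    rw [_root_.mul_inv_rev, ← Kmul, ← Kmul]
    noncomm_ring
  rw [hh]
  exact hσ _ (hτ Q hQ)

lemma Cone : Cprop 1 := by
  intro Q hQ
  simpa [inv_one, Kone] using hQ

lemma conj_s_1 : Kmat (Equiv.swap 0 1) * Bid1 *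
    Kmat ((Equiv.swap 0 1)⁻¹) = Bid1 := by
  rw [show (Equiv.swap (0:Fin 4) 1)⁻¹ = Equiv.swap 0 1 from by decide]
  rw [eqKs, eqB1]
  rw [mulFin4, mulFin4]
  exact eqFin4 (by norm_num) (by norm_num) (by norm_num) (by norm_num) (by norm_num) (by norm_num) (by norm_num) (by norm_num) (by norm_num) (by norm_num) (by norm_num) (by norm_num) (by norm_num) (by norm_num) (by norm_num) (by norm_num)

lemma conj_s_2 : Kmat (Equiv.swap 0 1) * Bid2 *
    Kmat ((Equiv.swap 0 1)⁻¹) = Bid2 := by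
  rw [show (Equiv.swap (0:Fin 4) 1)⁻¹ = Equiv.swap 0 1 from by decide]
  rw [eqKs, eqB2]
  rw [mulFin4, mulFin4]
  exact eqFin4 (by norm_num) (by norm_num) (by norm_num) (by norm_num) (by norm_num) (by norm_num) (by norm_num) (by norm_num) (by norm_num) (by norm_num) (by norm_num) (by norm_num) (by norm_num) (by norm_num) (by norm_num) (by norm_num)

lemma conj_s_3 : Kmat (Equiv.swap 0 1) * Bsgn *
    Kmat ((Equiv.swap 0 1)⁻¹) = -Bsgn := by
  rw [show (Equiv.swap (0:Fin 4) 1)⁻¹ = Equiv.swap 0 1 from by decide]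
  rw [eqKs, eqB3]
  rw [mulFin4, mulFin4, negFin4]
  exact eqFin4 (by norm_num) (by norm_num) (by norm_num) (by norm_num) (by norm_num) (by norm_num) (by norm_num) (by norm_num) (by norm_num) (by norm_num) (by norm_num) (by norm_num) (by norm_num) (by norm_num) (by norm_num) (by norm_num)

lemma conj_s_4 : Kmat (Equiv.swap 0 1) * Bzeta1 *
    Kmat ((Equiv.swap 0 1)⁻¹) = -Bzeta1 := by
  rw [show (Equiv.swap (0:Fin 4) 1)⁻¹ = Equiv.swap 0 1 from by decide]
  rw [eqKs, eqB4]
  rw [mulFin4, mulFin4, negFin4]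
  exact eqFin4 (by norm_num) (by norm_num) (by norm_num) (by norm_num) (by norm_num) (by norm_num) (by norm_num) (by norm_num) (by norm_num) (by norm_num) (by norm_num) (by norm_num) (by norm_num) (by norm_num) (by norm_num) (by norm_num)

lemma conj_s_5 : Kmat (Equiv.swap 0 1) * Bzeta2_1 *
    Kmat ((Equiv.swap 0 1)⁻¹) = Bzeta2_1 := by
  rw [show (Equiv.swap (0:Fin 4) 1)⁻¹ = Equiv.swap 0 1 from by decide]
  rw [eqKs, eqB5]
  rw [mulFin4, mulFin4]
  exact eqFin4 (by norm_num) (by norm_num) (by norm_num) (by norm_num) (by norm_num) (by norm_num) (by norm_num) (by norm_num) (by norm_num) (by norm_num) (by norm_num) (by norm_num) (by norm_num) (by norm_num) (by norm_num) (by norm_num)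

lemma conj_s_6 : Kmat (Equiv.swap 0 1) * Bzeta2_2 *
    Kmat ((Equiv.swap 0 1)⁻¹) = Bzeta2_2 := by
  rw [show (Equiv.swap (0:Fin 4) 1)⁻¹ = Equiv.swap 0 1 from by decide]
  rw [eqKs, eqB6]
  rw [mulFin4, mulFin4]
  exact eqFin4 (by norm_num) (by norm_num) (by norm_num) (by norm_num) (by norm_num) (by norm_num) (by norm_num) (by norm_num) (by norm_num) (by norm_num) (by norm_num) (by norm_num) (by norm_num) (by norm_num) (by norm_num) (by norm_num)

lemma Cs : Cprop (Equiv.swap 0 1) := by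
  apply Cspan
  intro b hb
  simp only [Set.mem_insert_iff, Set.mem_singleton_iff] at hb
  rcases hb with rfl|rfl|rfl|rfl|rfl|rfl
  · rw [conj_s_1]; exact hB1
  · rw [conj_s_2]; exact hB2
  · rw [conj_s_3]; exact neg_mem hB3
  · rw [conj_s_4]; exact neg_mem hB4
  · rw [conj_s_5]; exact hB5
  · rw [conj_s_6]; exact hB6

lemma conj_g_1 : Kmat (c1324) * Bid1 *
    Kmat ((c1324)⁻¹) = Bid1 := by
  rw [show c1324⁻¹ = c1423 from by decide]
  rw [eqKg, eqKginv, eqB1]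
  rw [mulFin4, mulFin4]
  exact eqFin4 (by norm_num) (by norm_num) (by norm_num) (by norm_num) (by norm_num) (by norm_num) (by norm_num) (by norm_num) (by norm_num) (by norm_num) (by norm_num) (by norm_num) (by norm_num) (by norm_num) (by norm_num) (by norm_num)

lemma conj_g_2 : Kmat (c1324) * Bid2 *
    Kmat ((c1324)⁻¹) = Bid2 := by
  rw [show c1324⁻¹ = c1423 from by decide]
  rw [eqKg, eqKginv, eqB2]
  rw [mulFin4, mulFin4]
  exact eqFin4 (by norm_num) (by norm_num) (by norm_num) (by norm_num) (by norm_num) (by norm_num) (by norm_num) (by norm_num) (by norm_num) (by norm_num) (by norm_num) (by norm_num) (by norm_num) (by norm_num) (by norm_num) (by norm_num)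

lemma conj_g_3 : Kmat (c1324) * Bsgn *
    Kmat ((c1324)⁻¹) = -Bsgn := by
  rw [show c1324⁻¹ = c1423 from by decide]
  rw [eqKg, eqKginv, eqB3]
  rw [mulFin4, mulFin4, negFin4]
  exact eqFin4 (by norm_num) (by norm_num) (by norm_num) (by norm_num) (by norm_num) (by norm_num) (by norm_num) (by norm_num) (by norm_num) (by norm_num) (by norm_num) (by norm_num) (by norm_num) (by norm_num) (by norm_num) (by norm_num)

lemma conj_g_4 : Kmat (c1324) * Bzeta1 *
    Kmat ((c1324)⁻¹) = Bzeta1 := by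
  rw [show c1324⁻¹ = c1423 from by decide]
  rw [eqKg, eqKginv, eqB4]
  rw [mulFin4, mulFin4]
  exact eqFin4 (by norm_num) (by norm_num) (by norm_num) (by norm_num) (by norm_num) (by norm_num) (by norm_num) (by norm_num) (by norm_num) (by norm_num) (by norm_num) (by norm_num) (by norm_num) (by norm_num) (by norm_num) (by norm_num)

lemma conj_g_5 : Kmat (c1324) * Bzeta2_1 *
    Kmat ((c1324)⁻¹) = -Bzeta2_1 := by
  rw [show c1324⁻¹ = c1423 from by decide]
  rw [eqKg, eqKginv, eqB5]
  rw [mulFin4, mulFin4, negFin4]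
  exact eqFin4 (by norm_num) (by norm_num) (by norm_num) (by norm_num) (by norm_num) (by norm_num) (by norm_num) (by norm_num) (by norm_num) (by norm_num) (by norm_num) (by norm_num) (by norm_num) (by norm_num) (by norm_num) (by norm_num)

lemma conj_g_6 : Kmat (c1324) * Bzeta2_2 *
    Kmat ((c1324)⁻¹) = -Bzeta2_2 := by
  rw [show c1324⁻¹ = c1423 from by decide]
  rw [eqKg, eqKginv, eqB6]
  rw [mulFin4, mulFin4, negFin4]
  exact eqFin4 (by norm_num) (by norm_num) (by norm_num) (by norm_num) (by norm_num) (by norm_num) (by norm_num) (by norm_num) (by norm_num) (by norm_num) (by norm_num) (by norm_num) (by norm_num) (by norm_num) (by norm_num) (by norm_num)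

lemma Cg : Cprop (c1324) := by
  apply Cspan
  intro b hb
  simp only [Set.mem_insert_iff, Set.mem_singleton_iff] at hb
  rcases hb with rfl|rfl|rfl|rfl|rfl|rfl
  · rw [conj_g_1]; exact hB1
  · rw [conj_g_2]; exact hB2
  · rw [conj_g_3]; exact neg_mem hB3
  · rw [conj_g_4]; exact hB4
  · rw [conj_g_5]; exact neg_mem hB5
  · rw [conj_g_6]; exact neg_mem hB6

lemma C34 : Cprop (Equiv.swap 2 3) := by
  rw [show Equiv.swap (2:Fin 4) 3 = Equiv.swap 0 1 * (c1324 * c1324) from by decide]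
  exact Cmul Cs (Cmul Cg Cg)

lemma C1234 : Cprop (Equiv.swap 0 1 * Equiv.swap 2 3) := by
  rw [show Equiv.swap (0:Fin 4) 1 * Equiv.swap 2 3 = c1324 * c1324 from by decide]
  exact Cmul Cg Cg

lemma C1324' : Cprop (Equiv.swap 0 2 * Equiv.swap 1 3) := by
  rw [show Equiv.swap (0:Fin 4) 2 * Equiv.swap 1 3 = Equiv.swap 0 1 * c1324 from by decide]
  exact Cmul Cs Cg

lemma C1423' : Cprop (Equiv.swap 0 3 * Equiv.swap 1 2) := by
  rw [show Equiv.swap (0:Fin 4) 3 * Equiv.swap 1 2 = c1324 * Equiv.swap 0 1 from by decide]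
  exact Cmul Cg Cs

lemma Cc1423 : Cprop c1423 := by
  rw [show c1423 = c1324 * (c1324 * c1324) from by decide]
  exact Cmul Cg (Cmul Cg Cg)

theorem model_6_6_strand_symmetric :
    Module.finrank ℂ ↥model66 = 6 ∧
    ((model66 : Set (Matrix (Fin 4) (Fin 4) ℂ)) ⊆ LGMset) ∧
    (∀ X ∈ model66, ∀ Y ∈ model66, X * Y - Y * X ∈ model66) ∧
    (∀ σ ∈ Glist, ∀ Q ∈ model66, Kmat σ * Q * (Kmat σ)⁻¹ ∈ model66) := by
  refine ⟨finrank_model66, model66_sub_LGM, bracket_closed, ?_⟩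
  intro σ hσ Q hQ
  rw [Kinv]
  simp only [Glist, List.mem_cons, List.not_mem_nil, or_false] at hσ
  rcases hσ with rfl|rfl|rfl|rfl|rfl|rfl|rfl|rfl
  · exact Cone Q hQ
  · exact Cs Q hQ
  · exact C34 Q hQ
  · exact C1234 Q hQ
  · exact C1324' Q hQ
  · exact C1423' Q hQ
  · exact Cg Q hQ
  · exact Cc1423 Q hQ
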